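/- Let P be a finite poset and let Ω(P; t) be its order polynomial. Then for all s, t, Ω(P; s+t) = ∑_{I ideal of P} Ω(I; s)·Ω(P∖I; t), where the sum runs over all order ideals I of P (including ∅ and P), and P∖I carries the induced order. -/

import Mathlib

open scoped Classical

section Aux
variable {P : Type*} [Fintype P] [PartialOrder P]

abbrev SplitT (P : Type*) [Fintype P] [PartialOrder P] (n m : ℕ) :=
  Σ I : {I : Finset P // ∀ x ∈ I, ∀ y : P, y ≤ x → y ∈ I},
    {g : {x : P // x ∈ I.1} → Fin n // Monotone g} ×
    {h : {x : P // x ∈ (I.1)ᶜ} → Fin m // Monotone h}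

lemma SplitT_ext {n m : ℕ} (a b : SplitT P n m) (h1 : a.1.1 = b.1.1)
    (h2 : ∀ p (hpa : p ∈ a.1.1) (hpb : p ∈ b.1.1),
      (a.2.1.1 ⟨p, hpa⟩ : ℕ) = (b.2.1.1 ⟨p, hpb⟩ : ℕ))
    (h3 : ∀ p (hpa : p ∈ (a.1.1)ᶜ) (hpb : p ∈ (b.1.1)ᶜ),
      (a.2.2.1 ⟨p, hpa⟩ : ℕ) = (b.2.2.1 ⟨p, hpb⟩ : ℕ)) : a = b := by
  obtain ⟨⟨I, hI⟩, ⟨g, hg⟩, ⟨h, hh⟩⟩ := a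
  obtain ⟨⟨J, hJ⟩, ⟨g', hg'⟩, ⟨h', hh'⟩⟩ := b
  simp only at h1
  subst h1
  have hg2 : g = g' := by
    funext p
    exact Fin.ext (h2 p.1 p.2 p.2)
  have hh2 : h = h' := by
    funext p
    exact Fin.ext (h3 p.1 p.2 p.2)
  subst hg2; subst hh2
  rfl

noncomputable def splitFun (n m : ℕ) (f : {f : P → Fin (n+m) // Monotone f}) :
    SplitT P n m :=
  ⟨⟨Finset.univ.filter (fun x => (f.1 x : ℕ) < n), by
      intro x hx y hyx
      simp only [Finset.mem_filter, Finset.mem_univ, true_and] at hx ⊢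
      exact lt_of_le_of_lt (f.2 hyx) hx⟩,
    ⟨fun x => ⟨f.1 x, by
        have := x.2; simp only [Finset.mem_filter, Finset.mem_univ, true_and] at this
        exact this⟩, by
      intro a b hab
      exact f.2 hab⟩,
    ⟨fun x => ⟨(f.1 x : ℕ) - n, by
        have hx := x.2
        simp only [Finset.mem_compl, Finset.mem_filter, Finset.mem_univ, true_and,
          not_lt] at hx
        have := (f.1 x).2
        omega⟩, by
      intro a b hab
      have := f.2 hab
      simp only [Fin.mk_le_mk]
      exact Nat.sub_le_sub_right this n⟩⟩

noncomputable def unsplitFun (n m : ℕ) (x : SplitT P n m) :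
    {f : P → Fin (n+m) // Monotone f} :=
  ⟨fun p => if hp : p ∈ x.1.1 then
      ⟨(x.2.1.1 ⟨p, hp⟩ : ℕ), by have := (x.2.1.1 ⟨p, hp⟩).2; omega⟩
    else
      ⟨n + (x.2.2.1 ⟨p, by simpa using hp⟩ : ℕ), by
        have := (x.2.2.1 ⟨p, by simpa using hp⟩).2; omega⟩, by
    intro a b hab
    by_cases ha : a ∈ x.1.1 <;> by_cases hb : b ∈ x.1.1
    · simp only [dif_pos ha, dif_pos hb, Fin.mk_le_mk, Fin.val_fin_le]
      exact x.2.1.2 (show (⟨a, ha⟩ : {y : P // y ∈ x.1.1}) ≤ ⟨b, hb⟩ from hab)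
    · simp only [dif_pos ha, dif_neg hb, Fin.mk_le_mk]
      have := (x.2.1.1 ⟨a, ha⟩).2; omega
    · exact absurd (x.1.2 b hb a hab) ha
    · simp only [dif_neg ha, dif_neg hb, Fin.mk_le_mk]
      have := x.2.2.2
        (show (⟨a, by simpa using ha⟩ : {y : P // y ∈ (x.1.1)ᶜ}) ≤ ⟨b, by simpa using hb⟩
          from hab)
      simpa using this⟩

lemma unsplit_mem (n m : ℕ) (x : SplitT P n m) (p : P) :
    ((unsplitFun n m x).1 p : ℕ) < n ↔ p ∈ x.1.1 := by
  by_cases hp : p ∈ x.1.1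
  · simp [unsplitFun, hp, (x.2.1.1 ⟨p, hp⟩).2]
  · simp [unsplitFun, hp]

noncomputable def splitEquiv (n m : ℕ) :
    {f : P → Fin (n+m) // Monotone f} ≃ SplitT P n m where
  toFun := splitFun n m
  invFun := unsplitFun n m
  left_inv f := by
    ext p
    by_cases hp : (f.1 p : ℕ) < n
    · simp [unsplitFun, splitFun, hp]
    · have hp' : p ∉ (splitFun n m f).1.1 := by simp [splitFun, hp]
      simp only [unsplitFun, dif_neg hp']
      simp only [splitFun]
      have := (f.1 p).2
      omega
  right_inv x := by
    have hI : (splitFun n m (unsplitFun n m x)).1.1 = x.1.1 := by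
      ext p
      simp only [splitFun, Finset.mem_filter, Finset.mem_univ, true_and]
      exact unsplit_mem n m x p
    refine SplitT_ext _ _ hI ?_ ?_
    · intro p hpa hpb
      simp only [splitFun, unsplitFun, dif_pos hpb]
    · intro p hpa hpb
      have hpb' : p ∉ x.1.1 := by simpa using hpb
      simp only [splitFun, unsplitFun, dif_neg hpb']
      omega

end Aux

section Aux2
variable {P : Type*} [Fintype P] [PartialOrder P]

noncomputable def univEquiv (k : ℕ) :
    {f : {x : P // x ∈ (Finset.univ : Finset P)} → Fin k // Monotone f} ≃
      {f : P → Fin k // Monotone f} where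
  toFun f := ⟨fun p => f.1 ⟨p, Finset.mem_univ p⟩, fun a b hab => f.2 hab⟩
  invFun f := ⟨fun p => f.1 p.1, fun a b hab => f.2 hab⟩
  left_inv f := by ext ⟨p, hp⟩; rfl
  right_inv f := by ext p; rfl

lemma card_split (n m : ℕ) :
    Nat.card {f : {x : P // x ∈ (Finset.univ : Finset P)} → Fin (n+m) // Monotone f}
      = ∑ I ∈ Finset.univ.filter
          (fun I : Finset P => ∀ x ∈ I, ∀ y : P, y ≤ x → y ∈ I),
        Nat.card {g : {x : P // x ∈ I} → Fin n // Monotone g}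
          * Nat.card {h : {x : P // x ∈ Iᶜ} → Fin m // Monotone h} := by
  rw [Nat.card_congr (univEquiv (n+m)), Nat.card_congr (splitEquiv n m)]
  rw [Nat.card_eq_fintype_card]
  rw [Fintype.card_sigma]
  have : ∀ I : {I : Finset P // ∀ x ∈ I, ∀ y : P, y ≤ x → y ∈ I},
      Fintype.card ({g : {x : P // x ∈ I.1} → Fin n // Monotone g} ×
        {h : {x : P // x ∈ (I.1)ᶜ} → Fin m // Monotone h})
      = Nat.card {g : {x : P // x ∈ I.1} → Fin n // Monotone g}
          * Nat.card {h : {x : P // x ∈ (I.1)ᶜ} → Fin m // Monotone h} := by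
    intro I
    rw [Fintype.card_prod, Nat.card_eq_fintype_card, Nat.card_eq_fintype_card]
  simp only [this]
  rw [Finset.sum_subtype (p := fun I : Finset P => ∀ x ∈ I, ∀ y : P, y ≤ x → y ∈ I) (Finset.univ.filter
      (fun I : Finset P => ∀ x ∈ I, ∀ y : P, y ≤ x → y ∈ I))
      (by intro I; simp) (fun I => Nat.card {g : {x : P // x ∈ I} → Fin n // Monotone g}
          * Nat.card {h : {x : P // x ∈ Iᶜ} → Fin m // Monotone h})]

end Aux2

theorem stmt_11 {P : Type*} [Fintype P] [PartialOrder P]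
    (Ω : Finset P → Polynomial ℚ)
    (hΩ : ∀ (T : Finset P) (n : ℕ), 1 ≤ n →
      (Ω T).eval (n : ℚ) = (Nat.card {f : {x : P // x ∈ T} → Fin n // Monotone f} : ℚ)) :
    ∀ s t : ℚ,
      (Ω Finset.univ).eval (s + t)
        = ∑ I ∈ Finset.univ.filter
            (fun I : Finset P => ∀ x ∈ I, ∀ y : P, y ≤ x → y ∈ I),
          (Ω I).eval s * (Ω Iᶜ).eval t := by
  set Idls := Finset.univ.filter
      (fun I : Finset P => ∀ x ∈ I, ∀ y : P, y ≤ x → y ∈ I) with hIdls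
  -- Step 1: the identity for positive natural arguments
  have key : ∀ n m : ℕ, 1 ≤ n → 1 ≤ m →
      (Ω Finset.univ).eval ((n : ℚ) + m)
        = ∑ I ∈ Idls, (Ω I).eval (n : ℚ) * (Ω Iᶜ).eval (m : ℚ) := by
    intro n m hn hm
    have h1 : ((n : ℚ) + m) = ((n + m : ℕ) : ℚ) := by push_cast; ring
    rw [h1, hΩ _ (n + m) (by omega), card_split n m, Nat.cast_sum]
    refine Finset.sum_congr rfl ?_
    intro I _
    rw [Nat.cast_mul, hΩ I n hn, hΩ Iᶜ m hm]
  have infnat : ∀ S : Set ℚ, (∀ k : ℕ, ((k + 1 : ℕ) : ℚ) ∈ S) → S.Infinite := by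
    intro S hS
    apply Set.infinite_of_injective_forall_mem (f := fun k : ℕ => ((k + 1 : ℕ) : ℚ))
    · intro a b hab
      have := Nat.cast_injective (R := ℚ) hab
      omega
    · exact hS
  -- Step 2: fix m natural, vary s over ℚ
  have key2 : ∀ m : ℕ, 1 ≤ m → ∀ s : ℚ,
      (Ω Finset.univ).eval (s + m)
        = ∑ I ∈ Idls, (Ω I).eval s * (Ω Iᶜ).eval (m : ℚ) := by
    intro m hm
    have hpoly : (Ω Finset.univ).comp (Polynomial.X + Polynomial.C (m : ℚ))
        = ∑ I ∈ Idls, Ω I * Polynomial.C ((Ω Iᶜ).eval (m : ℚ)) := by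
      apply Polynomial.eq_of_infinite_eval_eq
      apply infnat
      intro k
      simp only [Set.mem_setOf_eq, Polynomial.eval_comp, Polynomial.eval_add,
        Polynomial.eval_X, Polynomial.eval_C, Polynomial.eval_finset_sum,
        Polynomial.eval_mul]
      exact key (k + 1) m (by omega) hm
    intro s
    have := congrArg (Polynomial.eval s) hpoly
    simpa [Polynomial.eval_comp, Polynomial.eval_finset_sum] using this
  -- Step 3: fix s rational, vary t over ℚ
  intro s t
  have hpoly : (Ω Finset.univ).comp (Polynomial.C s + Polynomial.X)
      = ∑ I ∈ Idls, Polynomial.C ((Ω I).eval s) * Ω Iᶜ := by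
    apply Polynomial.eq_of_infinite_eval_eq
    apply infnat
    intro k
    simp only [Set.mem_setOf_eq, Polynomial.eval_comp, Polynomial.eval_add,
      Polynomial.eval_X, Polynomial.eval_C, Polynomial.eval_finset_sum,
      Polynomial.eval_mul]
    exact key2 (k + 1) (by omega) s
  have := congrArg (Polynomial.eval t) hpoly
  simpa [Polynomial.eval_comp, Polynomial.eval_finset_sum] using this
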